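/- Let H be a Borel probability measure on the unit sphere S of Herm(N) (matrices R with Tr R² = 1), invariant under conjugation by every unitary, and suppose H is purely atomic (a countable sum of point masses). Then there exists p ∈ [0,1] such that H = p·δ_{I_N/√N} + (1−p)·δ_{−I_N/√N}. -/

import Mathlib

open Matrix MeasureTheory Complex

/-- The Borel (= product) measurable structure on `N×N` complex matrices. -/
noncomputable instance matrixMeasurableSpace {N : ℕ} :
    MeasurableSpace (Matrix (Fin N) (Fin N) ℂ) :=
  (inferInstance : MeasurableSpace (Fin N → Fin N → ℂ))

namespace AtomicAux

instance {N : ℕ} : MeasurableSingletonClass (Matrix (Fin N) (Fin N) ℂ) :=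
  (inferInstance : MeasurableSingletonClass (Fin N → Fin N → ℂ))

/-! ### The sequence of unit complex numbers -/

noncomputable def zseq (n : ℕ) : ℂ := Complex.exp ((Real.arctan n : ℝ) * I)

lemma zseq_mul_conj (n : ℕ) : zseq n * (starRingEnd ℂ) (zseq n) = 1 := by
  rw [Complex.mul_conj']
  rw [show zseq n = Complex.exp ((Real.arctan n : ℝ) * I) from rfl,
    Complex.norm_exp_ofReal_mul_I]
  norm_num

lemma zseq_im_inj : Function.Injective fun n : ℕ => (zseq n).im := by
  intro n m h
  have him : ∀ k : ℕ, (zseq k).im = Real.sin (Real.arctan k) := fun k =>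
    Complex.exp_ofReal_mul_I_im _
  simp only [him] at h
  have hmem : ∀ k : ℕ, Real.arctan k ∈ Set.Icc (-(Real.pi/2)) (Real.pi/2) := fun k =>
    ⟨le_of_lt (Real.neg_pi_div_two_lt_arctan _), le_of_lt (Real.arctan_lt_pi_div_two _)⟩
  have := Real.injOn_sin (hmem n) (hmem m) h
  have := Real.arctan_injective this
  exact_mod_cast this

lemma zseq_inj : Function.Injective zseq := fun n m h =>
  zseq_im_inj (show (zseq n).im = (zseq m).im by rw [h])

variable {N : ℕ}

/-! ### Measurability and invariance -/

lemma measurable_conj (U V : Matrix (Fin N) (Fin N) ℂ) :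
    Measurable (fun R : Matrix (Fin N) (Fin N) ℂ => U * R * V) := by
  apply measurable_pi_lambda _ fun i => measurable_pi_lambda _ fun k => ?_
  simp only [Matrix.mul_apply]
  exact Finset.measurable_sum _ fun b _ =>
    ((Finset.measurable_sum _ fun a _ =>
      (measurable_const.mul ((measurable_pi_apply b).comp (measurable_pi_apply a)))).mul
      measurable_const)

lemma meas_conj_singleton (H : Measure (Matrix (Fin N) (Fin N) ℂ))
    (hinv : ∀ U : Matrix.unitaryGroup (Fin N) ℂ,
      Measure.map (fun R => U.1 * R * star U.1) H = H)
    (U : Matrix.unitaryGroup (Fin N) ℂ) (R : Matrix (Fin N) (Fin N) ℂ) :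
    H {U.1 * R * star U.1} = H {R} := by
  have hsU : star U.1 * U.1 = 1 := Unitary.star_mul_self_of_mem U.2
  conv_lhs => rw [← hinv U]
  rw [Measure.map_apply (measurable_conj _ _) (measurableSet_singleton _)]
  congr 1
  ext S
  simp only [Set.mem_preimage, Set.mem_singleton_iff]
  constructor
  · intro h
    have h2 := congrArg (fun M => star U.1 * M * U.1) h
    simp only [← Matrix.mul_assoc, hsU, Matrix.one_mul] at h2
    rw [Matrix.mul_assoc, Matrix.mul_assoc, hsU, Matrix.mul_one, Matrix.mul_one] at h2
    exact h2
  · rintro rfl; rfl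

/-! ### Case A: diagonal phase unitaries -/

noncomputable def Udiag (z : ℂ) (j : Fin N) : Matrix (Fin N) (Fin N) ℂ :=
  Matrix.diagonal (fun i => if i = j then z else 1)

lemma Udiag_mem (z : ℂ) (hz : z * (starRingEnd ℂ) z = 1) (j : Fin N) :
    Udiag z j ∈ Matrix.unitaryGroup (Fin N) ℂ := by
  rw [Matrix.mem_unitaryGroup_iff]
  rw [show star (Udiag z j) = (Udiag z j)ᴴ from rfl, Udiag,
    Matrix.diagonal_conjTranspose, Matrix.diagonal_mul_diagonal]
  ext i i'
  by_cases h : i = i'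
  · subst h
    by_cases hj : i = j
    · subst hj; simp [hz]
    · simp [hj]
  · simp [Matrix.diagonal_apply_ne _ h, Matrix.one_apply_ne h]

lemma Udiag_conj_apply (z : ℂ) (j k : Fin N) (hk : k ≠ j) (R : Matrix (Fin N) (Fin N) ℂ) :
    (Udiag z j * R * star (Udiag z j)) j k = z * R j k := by
  rw [show star (Udiag z j) = (Udiag z j)ᴴ from rfl, Udiag, Matrix.diagonal_conjTranspose,
    Matrix.mul_diagonal, Matrix.diagonal_mul]
  simp [hk]

/-! ### Case B: reflections about a plane -/

noncomputable def Pm (j k : Fin N) : Matrix (Fin N) (Fin N) ℂ :=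
  Matrix.of fun a b => (if a = j ∨ a = k then 1 else 0) * (if b = j ∨ b = k then 1 else 0) * (2⁻¹ : ℂ)

lemma Pm_star (j k : Fin N) : star (Pm j k) = Pm j k := by
  ext a b
  simp only [Matrix.star_apply, Pm, Matrix.of_apply]
  split_ifs <;> norm_num

lemma Pm_mul_self (j k : Fin N) (hjk : j ≠ k) : Pm j k * Pm j k = Pm j k := by
  ext a b
  rw [Matrix.mul_apply, Finset.sum_eq_add_of_mem j k (Finset.mem_univ _) (Finset.mem_univ _) hjk ?_]
  · simp only [Pm, Matrix.of_apply]
    split_ifs <;> simp_all <;> norm_num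
  · intro c _ hc
    simp [Pm, hc.1, hc.2]

noncomputable def UB (z : ℂ) (j k : Fin N) : Matrix (Fin N) (Fin N) ℂ :=
  1 + (z - 1) • Pm j k

lemma UB_star (z : ℂ) (j k : Fin N) :
    star (UB z j k) = 1 + ((starRingEnd ℂ) z - 1) • Pm j k := by
  simp [UB, star_add, star_smul, Pm_star, star_sub]

lemma UB_expand (α β : ℂ) (j k : Fin N) (hjk : j ≠ k) :
    (1 + α • Pm j k) * (1 + β • Pm j k) = 1 + (α + β + α * β) • Pm j k := by
  simp only [mul_add, add_mul, one_mul, mul_one, Matrix.smul_mul, Matrix.mul_smul,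
    Pm_mul_self j k hjk, smul_smul]
  rw [add_smul, add_smul, mul_comm β α]
  abel

lemma UB_mem (z : ℂ) (hz : z * (starRingEnd ℂ) z = 1) (j k : Fin N) (hjk : j ≠ k) :
    UB z j k ∈ Matrix.unitaryGroup (Fin N) ℂ := by
  rw [Matrix.mem_unitaryGroup_iff, UB_star, UB, UB_expand _ _ _ _ hjk]
  have : (z - 1) + ((starRingEnd ℂ) z - 1) + (z - 1) * ((starRingEnd ℂ) z - 1) = 0 := by
    linear_combination hz
  rw [this, zero_smul, add_zero]

lemma UB_conj_apply (z : ℂ) (hz : z * (starRingEnd ℂ) z = 1) (j k : Fin N) (hjk : j ≠ k)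
    (R : Matrix (Fin N) (Fin N) ℂ) (hdiag : ∀ a b : Fin N, a ≠ b → R a b = 0) :
    (UB z j k * R * star (UB z j k)) j k
      = (z - (starRingEnd ℂ) z) * (R k k - R j j) / 4 := by
  have hPjj : Pm j k j j = 2⁻¹ := by simp [Pm]
  have hPjk : Pm j k j k = 2⁻¹ := by simp [Pm]
  have hPkk : Pm j k k k = 2⁻¹ := by simp [Pm]
  have expand2 : UB z j k * R * star (UB z j k)
      = R + (z-1) • (Pm j k * R) + ((starRingEnd ℂ) z - 1) • (R * Pm j k)
        + (((starRingEnd ℂ) z - 1)*(z-1)) • ((Pm j k * R) * Pm j k) := by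
    rw [UB_star, UB]
    simp only [add_mul, mul_add, one_mul, mul_one, Matrix.smul_mul, Matrix.mul_smul, smul_smul]
    abel
  have hPR : (Pm j k * R) j k = 2⁻¹ * R k k := by
    rw [Matrix.mul_apply, Finset.sum_eq_single k
      (fun b _ hb => by rw [hdiag b k hb, mul_zero])
      (fun h => absurd (Finset.mem_univ k) h), hPjk]
  have hRP : (R * Pm j k) j k = R j j * 2⁻¹ := by
    rw [Matrix.mul_apply, Finset.sum_eq_single j
      (fun b _ hb => by rw [hdiag j b (fun h => hb h.symm), zero_mul])
      (fun h => absurd (Finset.mem_univ j) h), hPjk]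
  have hPRd : ∀ d : Fin N, (Pm j k * R) j d = Pm j k j d * R d d := fun d => by
    rw [Matrix.mul_apply, Finset.sum_eq_single d
      (fun b _ hb => by rw [hdiag b d hb, mul_zero])
      (fun h => absurd (Finset.mem_univ d) h)]
  have hPRP : ((Pm j k * R) * Pm j k) j k = 2⁻¹ * R j j * 2⁻¹ + 2⁻¹ * R k k * 2⁻¹ := by
    rw [Matrix.mul_apply, Finset.sum_eq_add_of_mem j k (Finset.mem_univ _) (Finset.mem_univ _)
      hjk (fun c _ hc => by
        rw [hPRd c, show Pm j k j c = 0 by simp [Pm, hc.1, hc.2], zero_mul, zero_mul]),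
      hPRd j, hPRd k, hPjj, hPjk, hPkk]
  rw [expand2]
  simp only [Matrix.add_apply, Matrix.smul_apply, hPR, hRP, hPRP, hdiag j k hjk, smul_eq_mul]
  linear_combination ((R j j + R k k)/4) * hz

/-! ### The family of distinct conjugates -/

lemma exists_inj_conj (hN : 0 < N) (R : Matrix (Fin N) (Fin N) ℂ)
    (hns : ∀ c : ℂ, R ≠ c • (1 : Matrix (Fin N) (Fin N) ℂ)) :
    ∃ f : ℕ → Matrix.unitaryGroup (Fin N) ℂ,
      Function.Injective (fun n => (f n).1 * R * star (f n).1) := by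
  by_cases hoff : ∃ j k : Fin N, j ≠ k ∧ R j k ≠ 0
  · obtain ⟨j, k, hjk, hR⟩ := hoff
    refine ⟨fun n => ⟨Udiag (zseq n) j, Udiag_mem _ (zseq_mul_conj n) j⟩, ?_⟩
    intro n m h
    have h2 : zseq n * R j k = zseq m * R j k := by
      rw [← Udiag_conj_apply (zseq n) j k (Ne.symm hjk), ← Udiag_conj_apply (zseq m) j k (Ne.symm hjk)]
      exact congrFun (congrFun h j) k
    exact zseq_inj (mul_right_cancel₀ hR h2)
  · push_neg at hoff
    have hdd : ∃ j k : Fin N, R j j ≠ R k k := by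
      by_contra hall
      push_neg at hall
      refine hns (R ⟨0, hN⟩ ⟨0, hN⟩) ?_
      ext a b
      by_cases hab : a = b
      · subst hab
        simp [hall a ⟨0, hN⟩, Matrix.one_apply_eq]
      · simp [hoff a b hab, Matrix.one_apply_ne hab]
    obtain ⟨j, k, hab⟩ := hdd
    have hjk : j ≠ k := fun h => hab (by rw [h])
    refine ⟨fun n => ⟨UB (zseq n) j k, UB_mem _ (zseq_mul_conj n) j k hjk⟩, ?_⟩
    intro n m h
    have h2 : (zseq n - (starRingEnd ℂ) (zseq n)) * (R k k - R j j) / 4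
        = (zseq m - (starRingEnd ℂ) (zseq m)) * (R k k - R j j) / 4 := by
      rw [← UB_conj_apply (zseq n) (zseq_mul_conj n) j k hjk R hoff,
        ← UB_conj_apply (zseq m) (zseq_mul_conj m) j k hjk R hoff]
      exact congrFun (congrFun h j) k
    have hd : (R k k - R j j) ≠ 0 := sub_ne_zero.mpr (Ne.symm hab)
    have h3 : zseq n - (starRingEnd ℂ) (zseq n) = zseq m - (starRingEnd ℂ) (zseq m) := by
      field_simp at h2
      exact h2
    rw [Complex.sub_conj, Complex.sub_conj] at h3
    have h4 : ((2 * (zseq n).im : ℝ) : ℂ) = ((2 * (zseq m).im : ℝ) : ℂ) :=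
      mul_right_cancel₀ Complex.I_ne_zero h3
    have h5 : 2 * (zseq n).im = 2 * (zseq m).im := by exact_mod_cast h4
    exact zseq_im_inj (by linarith)

/-! ### No infinitely many atoms of equal mass -/

lemma no_inf_atoms {X : Type*} [MeasurableSpace X] [MeasurableSingletonClass X]
    (H : Measure X) [IsProbabilityMeasure H] (g : ℕ → X) (hg : Function.Injective g)
    (m : ENNReal) (hm : m ≠ 0) (hmeq : ∀ n, H {g n} = m) : False := by
  have hdisj : Pairwise (Function.onFun Disjoint fun n => ({g n} : Set X)) := by
    intro n k hnk
    exact Set.disjoint_singleton.mpr fun h => hnk (hg h)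
  have htop : H (⋃ n, {g n}) = ⊤ := by
    rw [measure_iUnion hdisj fun n => measurableSet_singleton _]
    simp only [hmeq]
    exact ENNReal.tsum_const_eq_top_of_ne_zero hm
  exact measure_ne_top H _ htop

lemma scalar_case {N : ℕ} (hN : 0 < N) (c : ℂ)
    (hherm : (c • (1 : Matrix (Fin N) (Fin N) ℂ)).IsHermitian)
    (htr : Matrix.trace ((c • (1 : Matrix (Fin N) (Fin N) ℂ)) * (c • 1)) = 1) :
    c • (1 : Matrix (Fin N) (Fin N) ℂ) = (((Real.sqrt N)⁻¹ : ℝ) : ℂ) • 1 ∨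
    c • (1 : Matrix (Fin N) (Fin N) ℂ) = -((((Real.sqrt N)⁻¹ : ℝ) : ℂ) • 1) := by
  have hc : (starRingEnd ℂ) c = c := by
    have h := congrFun (congrFun hherm ⟨0, hN⟩) ⟨0, hN⟩
    simpa [Matrix.conjTranspose_apply, Matrix.one_apply_eq] using h
  obtain ⟨r, rfl⟩ := Complex.conj_eq_iff_real.mp hc
  have htr2 : ((r : ℂ))^2 * N = 1 := by
    rw [smul_mul_smul_comm, one_mul, Matrix.trace_smul, Matrix.trace_one] at htr
    simpa [sq, Fintype.card_fin, smul_eq_mul, mul_assoc] using htr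
  have htr3 : r^2 * N = 1 := by exact_mod_cast htr2
  have hNpos : (0:ℝ) < N := by exact_mod_cast hN
  have hs2 : ((Real.sqrt N)⁻¹)^2 = (N:ℝ)⁻¹ := by
    rw [← Real.sqrt_inv]
    exact Real.sq_sqrt (by positivity)
  have hr2 : r^2 = ((Real.sqrt N)⁻¹)^2 := by
    rw [hs2]
    field_simp at htr3 ⊢
    linarith
  rcases sq_eq_sq_iff_eq_or_eq_neg.mp hr2 with h | h
  · left; rw [h]
  · right; rw [h]; push_cast; rw [neg_smul]


end AtomicAux

open AtomicAux in
/-- An atomic Borel probability measure on the unit sphere of `Herm(N)`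
(w.r.t. the Frobenius norm) that is invariant under unitary conjugation is a
convex combination of the point masses at `±I_N/√N`. -/
theorem atomic_invariant_spectral_measure {N : ℕ} (hN : 0 < N)
    (H : Measure (Matrix (Fin N) (Fin N) ℂ)) [IsProbabilityMeasure H]
    (hsupp : H {R | ¬(R.IsHermitian ∧ Matrix.trace (R * R) = 1)} = 0)
    (hinv : ∀ U : Matrix.unitaryGroup (Fin N) ℂ,
      Measure.map (fun R => U.1 * R * star U.1) H = H)
    (hatomic : ∃ D : Set (Matrix (Fin N) (Fin N) ℂ), D.Countable ∧ H Dᶜ = 0) :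
    ∃ p : ℝ, 0 ≤ p ∧ p ≤ 1 ∧
      H = ENNReal.ofReal p •
            Measure.dirac ((((Real.sqrt N)⁻¹ : ℝ) : ℂ) • (1 : Matrix (Fin N) (Fin N) ℂ)) +
          ENNReal.ofReal (1 - p) •
            Measure.dirac (-((((Real.sqrt N)⁻¹ : ℝ) : ℂ) • (1 : Matrix (Fin N) (Fin N) ℂ))) := by
  classical
  set xp : Matrix (Fin N) (Fin N) ℂ := (((Real.sqrt N)⁻¹ : ℝ) : ℂ) • 1 with hxp
  set xm : Matrix (Fin N) (Fin N) ℂ := -xp with hxm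
  -- every atom is xp or xm
  have key : ∀ y : Matrix (Fin N) (Fin N) ℂ, y ≠ xp → y ≠ xm → H {y} = 0 := by
    intro y hyp hym
    by_contra h0
    have hygood : y.IsHermitian ∧ Matrix.trace (y * y) = 1 := by
      by_contra hbad
      exact h0 (le_antisymm
        (le_trans (measure_mono (Set.singleton_subset_iff.mpr hbad)) hsupp.le) zero_le)
    by_cases hsc : ∃ c : ℂ, y = c • (1 : Matrix (Fin N) (Fin N) ℂ)
    · obtain ⟨c, rfl⟩ := hsc
      rcases scalar_case hN c hygood.1 hygood.2 with h | h
      · exact hyp h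
      · exact hym h
    · push_neg at hsc
      obtain ⟨f, hfinj⟩ := exists_inj_conj hN y hsc
      exact no_inf_atoms H _ hfinj (H {y}) h0
        (fun n => meas_conj_singleton H hinv (f n) y)
  obtain ⟨D, hDc, hD0⟩ := hatomic
  have hTc : H (({xp, xm} : Set (Matrix (Fin N) (Fin N) ℂ))ᶜ) = 0 := by
    have h1 : H (D \ {xp, xm}) = 0 := by
      have he : D \ {xp, xm} = ⋃ y ∈ D \ {xp, xm}, {y} := (Set.biUnion_of_singleton _).symm
      rw [he, (measure_biUnion_null_iff (hDc.mono Set.diff_subset)).2]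
      intro y hy
      exact key y (fun h => hy.2 (Or.inl h)) (fun h => hy.2 (Or.inr h))
    have hsub : ({xp, xm} : Set (Matrix (Fin N) (Fin N) ℂ))ᶜ ⊆ Dᶜ ∪ (D \ {xp, xm}) := by
      intro y hy
      by_cases hD : y ∈ D
      · exact Or.inr ⟨hD, hy⟩
      · exact Or.inl hD
    refine le_antisymm (le_trans (measure_mono hsub) ?_) zero_le
    calc H (Dᶜ ∪ (D \ {xp, xm})) ≤ H Dᶜ + H (D \ {xp, xm}) := measure_union_le _ _
      _ = 0 := by rw [hD0, h1, add_zero]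
  have hxpm : xp ≠ xm := by
    intro h
    have h2 := congrFun (congrFun h ⟨0, hN⟩) ⟨0, hN⟩
    have hs : ((Real.sqrt N)⁻¹ : ℝ) ≠ 0 := by
      have : (0:ℝ) < Real.sqrt N := Real.sqrt_pos.mpr (by exact_mod_cast hN)
      positivity
    rw [hxm, hxp] at h2
    simp only [Matrix.neg_apply, Matrix.smul_apply, Matrix.one_apply_eq, smul_eq_mul,
      mul_one] at h2
    have h3 : ((Real.sqrt N)⁻¹ : ℝ) = -((Real.sqrt N)⁻¹ : ℝ) := by exact_mod_cast h2
    exact hs (by linarith)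
  have hmT : MeasurableSet ({xp, xm} : Set (Matrix (Fin N) (Fin N) ℂ)) :=
    (measurableSet_singleton xm).insert xp
  have hT1 : H {xp, xm} = 1 := by
    have hcompl := measure_add_measure_compl (μ := H) hmT
    rw [hTc, add_zero, measure_univ] at hcompl
    exact hcompl
  have hsum : H ({xp, xm} : Set (Matrix (Fin N) (Fin N) ℂ)) = H {xp} + H {xm} := by
    rw [show ({xp, xm} : Set (Matrix (Fin N) (Fin N) ℂ)) = {xp} ∪ {xm} from rfl,
      measure_union (Set.disjoint_singleton.mpr hxpm) (measurableSet_singleton _)]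
  have hab : H {xp} + H {xm} = 1 := by rw [← hsum, hT1]
  have hane : H ({xp} : Set (Matrix (Fin N) (Fin N) ℂ)) ≠ ⊤ := measure_ne_top H _
  have hbne : H ({xm} : Set (Matrix (Fin N) (Fin N) ℂ)) ≠ ⊤ := measure_ne_top H _
  refine ⟨(H {xp}).toReal, ENNReal.toReal_nonneg, ?_, ?_⟩
  · have ha1 : H {xp} ≤ 1 := le_of_le_of_eq le_self_add hab
    have := (ENNReal.toReal_le_toReal hane ENNReal.one_ne_top).2 ha1
    simpa using this
  · have hofa : ENNReal.ofReal (H {xp}).toReal = H {xp} := ENNReal.ofReal_toReal hane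
    have habr : (H {xp}).toReal + (H {xm}).toReal = 1 := by
      rw [← ENNReal.toReal_add hane hbne, hab, ENNReal.toReal_one]
    have hofb : ENNReal.ofReal (1 - (H {xp}).toReal) = H {xm} := by
      rw [show (1 : ℝ) - (H {xp}).toReal = (H {xm}).toReal by linarith,
        ENNReal.ofReal_toReal hbne]
    rw [hofa, hofb]
    ext t ht
    rw [Measure.add_apply, Measure.smul_apply, Measure.smul_apply,
      Measure.dirac_apply' _ ht, Measure.dirac_apply' _ ht]
    have hsplit : H t = H (t ∩ {xp, xm}) := by
      have hiad := measure_inter_add_diff (μ := H) t hmT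
      have hdz : H (t \ {xp, xm}) = 0 :=
        le_antisymm (le_trans (measure_mono fun z hz => hz.2) hTc.le) zero_le
      rw [← hiad, hdz, add_zero]
    rw [hsplit]
    by_cases hp : xp ∈ t <;> by_cases hm : xm ∈ t
    · have : t ∩ {xp, xm} = {xp, xm} :=
        Set.inter_eq_self_of_subset_right (by rintro z (rfl | rfl) <;> assumption)
      rw [this, hsum]
      simp [Set.indicator_of_mem hp, Set.indicator_of_mem hm]
    · have : t ∩ {xp, xm} = {xp} := by
        ext z
        constructor
        · rintro ⟨hz, rfl | rfl⟩
          · rfl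
          · exact absurd hz hm
        · rintro rfl
          exact ⟨hp, Or.inl rfl⟩
      rw [this]
      simp [Set.indicator_of_mem hp, Set.indicator_of_notMem hm]
    · have : t ∩ {xp, xm} = {xm} := by
        ext z
        constructor
        · rintro ⟨hz, rfl | rfl⟩
          · exact absurd hz hp
          · rfl
        · rintro rfl
          exact ⟨hm, Or.inr rfl⟩
      rw [this]
      simp [Set.indicator_of_notMem hp, Set.indicator_of_mem hm]
    · have : t ∩ {xp, xm} = ∅ := by
        ext z
        simp only [Set.mem_inter_iff, Set.mem_empty_iff_false, iff_false]
        rintro ⟨hz, rfl | rfl⟩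
        · exact hp hz
        · exact hm hz
      rw [this]
      simp [Set.indicator_of_notMem hp, Set.indicator_of_notMem hm]
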